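/- Let Γ be a strongly regular graph srg(v, k, λ, μ) with μ = λ + 1, and let A₁ be its adjacency matrix and A₂ = J − I − A₁. Then the 2v×2v matrix N = circ(A₁, A₂) (block circulant with first block row (A₁, A₂)) satisfies NNᵀ = (v−1)(I₂⊗I_v) + (v−2k+2λ)(I₂⊗(J−I)_v) + 0·((J−I)₂⊗I_v) + 2(k−λ−1)((J−I)₂⊗(J−I)_v); hence N is the incidence matrix of a symmetric rectangular design with parameters v₁ = 2v, k₁ = v−1, λ₁ = v−2k+2λ, λ₂ = 0, λ₃ = 2(k−λ−1), m = 2, n = v. -/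

import Mathlib

open Matrix Kronecker Finset

def Jmat (m : ℕ) : Matrix (Fin m) (Fin m) ℝ := Matrix.of fun _ _ => 1

/-- Theorem 8(i): for a strongly regular graph
`srg(v, k, λ, μ)` with `μ = λ + 1` and adjacency matrix `A₁`,
`N = circ(A₁, A₂)` with `A₂ = J − I − A₁` is the incidence matrix of a
symmetric rectangular design with `v₁ = 2v`, `k₁ = v−1`, `λ₁ = v−2k+2λ`,
`λ₂ = 0`, `λ₃ = 2(k−λ−1)`, `m = 2`, `n = v`. -/
theorem srg_to_RD (v : ℕ) (k lam : ℝ)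
    (A₁ : Matrix (Fin v) (Fin v) ℝ)
    (hsymm : A₁ᵀ = A₁)
    (h01 : ∀ x y, A₁ x y = 0 ∨ A₁ x y = 1)
    (hdiag : ∀ x, A₁ x x = 0)
    (hreg : ∀ x, ∑ y, A₁ x y = k)
    (hsrg : A₁ * A₁ = k • (1 : Matrix (Fin v) (Fin v) ℝ) + lam • A₁
      + (lam + 1) • (Jmat v - 1 - A₁))
    (A₂ : Matrix (Fin v) (Fin v) ℝ) (hA₂ : A₂ = Jmat v - 1 - A₁)
    (N : Matrix (Fin 2 × Fin v) (Fin 2 × Fin v) ℝ)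
    (hN : N = fun p q => (![A₁, A₂] (q.1 - p.1)) p.2 q.2) :
    N * Nᵀ =
      ((v : ℝ) - 1) • ((1 : Matrix (Fin 2) (Fin 2) ℝ) ⊗ₖ (1 : Matrix (Fin v) (Fin v) ℝ))
      + ((v : ℝ) - 2 * k + 2 * lam) • ((1 : Matrix (Fin 2) (Fin 2) ℝ) ⊗ₖ (Jmat v - 1))
      + (0 : ℝ) • ((Jmat 2 - 1) ⊗ₖ (1 : Matrix (Fin v) (Fin v) ℝ))
      + (2 * (k - lam - 1)) • ((Jmat 2 - 1) ⊗ₖ (Jmat v - 1)) := by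
  -- Basic identities from regularity
  have hAJ : A₁ * Jmat v = k • Jmat v := by
    ext x y
    simp [Jmat, mul_apply, Matrix.smul_apply, hreg x]
  have hJA : Jmat v * A₁ = k • Jmat v := by
    ext x y
    simp only [Jmat, mul_apply, of_apply, one_mul, Matrix.smul_apply, smul_eq_mul, mul_one]
    calc ∑ z, A₁ z y = ∑ z, A₁ y z := by
            refine Finset.sum_congr rfl fun z _ => ?_
            conv_lhs => rw [← hsymm]
            rfl
      _ = k := hreg y
  have hJJ : Jmat v * Jmat v = (v : ℝ) • Jmat v := by
    ext x y
    simp [Jmat, mul_apply]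
  -- The two key block identities
  have key1 : A₁ * A₁ + A₂ * A₂
      = ((v : ℝ) - 1) • (1 : Matrix (Fin v) (Fin v) ℝ)
        + ((v : ℝ) - 2*k + 2*lam) • (Jmat v - 1) := by
    rw [hA₂]
    simp only [mul_sub, sub_mul, mul_one, one_mul, hsrg, hAJ, hJA, hJJ]
    module
  have key2 : A₁ * A₂ + A₂ * A₁ = (2*(k - lam - 1)) • (Jmat v - 1) := by
    rw [hA₂]
    simp only [mul_sub, sub_mul, mul_one, one_mul, hsrg, hAJ, hJA, hJJ]
    module
  -- symmetry of A₂
  have hsymm2 : A₂ᵀ = A₂ := by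
    rw [hA₂]
    ext x y
    simp [Jmat, transpose_apply, one_apply, eq_comm]
    conv_lhs => rw [← hsymm]
    rfl
  -- decomposition of N as Kronecker sum
  have hNdec : N = (1 : Matrix (Fin 2) (Fin 2) ℝ) ⊗ₖ A₁ + (Jmat 2 - 1) ⊗ₖ A₂ := by
    subst hN
    ext ⟨a, x⟩ ⟨b, y⟩
    fin_cases a <;> fin_cases b <;>
      simp [kroneckerMap_apply, Jmat, one_apply] <;> rfl
  -- Fin 2 facts
  have hJ2 : (Jmat 2 - 1) * (Jmat 2 - 1) = (1 : Matrix (Fin 2) (Fin 2) ℝ) := by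
    ext i j
    fin_cases i <;> fin_cases j <;>
      simp [Jmat, mul_apply, Matrix.sub_apply, one_apply, Fin.sum_univ_two] <;> norm_num
  have hJ2symm : (Jmat 2 - 1)ᵀ = Jmat 2 - 1 := by
    ext i j
    simp [Jmat, transpose_apply, one_apply, eq_comm]
  -- compute N * Nᵀ
  rw [hNdec]
  rw [transpose_add, ← kroneckerMap_transpose, ← kroneckerMap_transpose, hsymm, hsymm2,
    hJ2symm, transpose_one]
  rw [add_mul, mul_add, mul_add]
  rw [← mul_kronecker_mul, ← mul_kronecker_mul, ← mul_kronecker_mul, ← mul_kronecker_mul]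
  rw [one_mul, one_mul, mul_one, hJ2]
  have e1 : (1 : Matrix (Fin 2) (Fin 2) ℝ) ⊗ₖ (A₁ * A₁) + (Jmat 2 - 1) ⊗ₖ (A₁ * A₂)
      + ((Jmat 2 - 1) ⊗ₖ (A₂ * A₁) + (1 : Matrix (Fin 2) (Fin 2) ℝ) ⊗ₖ (A₂ * A₂))
      = (1 : Matrix (Fin 2) (Fin 2) ℝ) ⊗ₖ (A₁ * A₁ + A₂ * A₂)
      + (Jmat 2 - 1) ⊗ₖ (A₁ * A₂ + A₂ * A₁) := by
    rw [kronecker_add, kronecker_add]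
    abel
  rw [e1, key1, key2]
  rw [kronecker_add, kronecker_smul, kronecker_smul, kronecker_smul, zero_smul, add_zero]
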